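/- Let w = w_0...w_{n−1} be a word with palindromic reduced word, C the associated critical-curve polynomial, and φ_t = arctan2(Q_{t−1}, Q_t) the angle of the t-th ray, with Poisson bracket {f, C} = (∂f/∂a)(∂C/∂b) − (∂f/∂b)(∂C/∂a). Then the sum over t = 1 to n of {φ_t, C} vanishes modulo the ideal generated by C; i.e., the sum of the ray angles is constant along the curve C = 0. -/

import Mathlib

/-- Continuants of a two-letter word: `s t = true` means the letter `w_t` is the
indeterminate `a`, `s t = false` means it is `b`.  `contQ s a b t = Q_t`, with
`Q_0 = 0`, `Q_1 = 1`, `Q_{t+1} = w_t Q_t - Q_{t-1}`. -/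
def contQ (s : ℕ → Bool) (a b : ℝ) : ℕ → ℝ
  | 0 => 0
  | 1 => 1
  | (t+2) => (if s (t+1) then a else b) * contQ s a b (t+1) - contQ s a b t

/-- The Poisson bracket `{f, g} = (∂f/∂a)(∂g/∂b) - (∂f/∂b)(∂g/∂a)`. -/
noncomputable def pb (f g : ℝ → ℝ → ℝ) (a b : ℝ) : ℝ :=
  deriv (fun u => f u b) a * deriv (fun v => g a v) b -
    deriv (fun v => f a v) b * deriv (fun u => g u b) a

/-- `Δ_t = Q_t {Q_{t-1}, C} - Q_{t-1} {Q_t, C}`, so that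
`{φ_t, C} = Δ_t/(Q_t² + Q_{t-1}²)` for the ray angle `φ_t = arctan2(Q_{t-1}, Q_t)`. -/
noncomputable def Δ (s : ℕ → Bool) (C : ℝ → ℝ → ℝ) (t : ℕ) (a b : ℝ) : ℝ :=
  contQ s a b t * pb (fun u v => contQ s u v (t - 1)) C a b -
    contQ s a b (t - 1) * pb (fun u v => contQ s u v t) C a b

/-- Partial derivative of `contQ` with respect to `a`. -/
def dQa (s : ℕ → Bool) (a b : ℝ) : ℕ → ℝ
  | 0 => 0
  | 1 => 0
  | (t+2) => (if s (t+1) then (1:ℝ) else 0) * contQ s a b (t+1)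
      + (if s (t+1) then a else b) * dQa s a b (t+1) - dQa s a b t

/-- Partial derivative of `contQ` with respect to `b`. -/
def dQb (s : ℕ → Bool) (a b : ℝ) : ℕ → ℝ
  | 0 => 0
  | 1 => 0
  | (t+2) => (if s (t+1) then (0:ℝ) else 1) * contQ s a b (t+1)
      + (if s (t+1) then a else b) * dQb s a b (t+1) - dQb s a b t

theorem hQa (s : ℕ → Bool) (a b : ℝ) :
    ∀ t, HasDerivAt (fun u => contQ s u b t) (dQa s a b t) a
  | 0 => by simpa [contQ, dQa] using hasDerivAt_const a (0:ℝ)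
  | 1 => by simpa [contQ, dQa] using hasDerivAt_const a (1:ℝ)
  | (t+2) => by
    have h1 := hQa s a b (t+1)
    have h0 := hQa s a b t
    have hc : HasDerivAt (fun u : ℝ => if s (t+1) then u else b)
        (if s (t+1) then (1:ℝ) else 0) a := by
      by_cases h : s (t+1) <;> simp only [h, if_true, if_false]
      · exact hasDerivAt_id a
      · exact hasDerivAt_const a b
    have := (hc.mul h1).sub h0
    simpa [contQ, dQa, Pi.mul_def, Pi.sub_def] using this

theorem hQb (s : ℕ → Bool) (a b : ℝ) :
    ∀ t, HasDerivAt (fun v => contQ s a v t) (dQb s a b t) b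
  | 0 => by simpa [contQ, dQb] using hasDerivAt_const b (0:ℝ)
  | 1 => by simpa [contQ, dQb] using hasDerivAt_const b (1:ℝ)
  | (t+2) => by
    have h1 := hQb s a b (t+1)
    have h0 := hQb s a b t
    have hc : HasDerivAt (fun v : ℝ => if s (t+1) then a else v)
        (if s (t+1) then (0:ℝ) else 1) b := by
      by_cases h : s (t+1) <;> simp only [h, if_true, if_false]
      · exact hasDerivAt_const b a
      · exact hasDerivAt_id b
    have := (hc.mul h1).sub h0
    simpa [contQ, dQb, Pi.mul_def, Pi.sub_def] using this

/-- Symmetry via two-sided induction on a second order recurrence. -/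
lemma sym_rec (n m : ℕ) (c g f : ℕ → ℝ)
    (hrec : ∀ t, f (t+2) = g (t+1) + c (t+1) * f (t+1) - f t)
    (hc : ∀ t, 1 ≤ t → t ≤ n - 1 → c (n - t) = c t)
    (hg : ∀ t, 1 ≤ t → t ≤ n - 1 → g (n - t) = g t)
    (hm1 : m + 1 ≤ n)
    (h0 : f (n - m) = f m) (h1 : f (n - (m+1)) = f (m+1)) :
    ∀ t ≤ n, f (n - t) = f t := by
  have key : ∀ t, 1 ≤ t → t + 1 ≤ n → f (n - t) = f t → f (n - (t-1)) = f (t-1) →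
      f (n - (t+1)) = f (t+1) := by
    intro t ht htn e0 e1
    have hA : f (t+1) = g t + c t * f t - f (t-1) := by
      have := hrec (t-1)
      rwa [show t-1+2 = t+1 by omega, show t-1+1 = t by omega] at this
    have hB : f (n-(t-1)) = g (n-t) + c (n-t) * f (n-t) - f (n-(t+1)) := by
      have := hrec (n-t-1)
      rwa [show n-t-1+2 = n-(t-1) by omega, show n-t-1+1 = n-t by omega,
        show n-t-1 = n-(t+1) by omega] at this
    have hcn := hc t ht (by omega)
    have hgn := hg t ht (by omega)
    rw [hcn, hgn, e0, e1] at hB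
    linarith [hA, hB]
  have keydown : ∀ t, 1 ≤ t → t + 1 ≤ n → f (n - t) = f t → f (n - (t+1)) = f (t+1) →
      f (n - (t-1)) = f (t-1) := by
    intro t ht htn e0 e1
    have hA : f (t+1) = g t + c t * f t - f (t-1) := by
      have := hrec (t-1)
      rwa [show t-1+2 = t+1 by omega, show t-1+1 = t by omega] at this
    have hB : f (n-(t-1)) = g (n-t) + c (n-t) * f (n-t) - f (n-(t+1)) := by
      have := hrec (n-t-1)
      rwa [show n-t-1+2 = n-(t-1) by omega, show n-t-1+1 = n-t by omega,
        show n-t-1 = n-(t+1) by omega] at this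
    have hcn := hc t ht (by omega)
    have hgn := hg t ht (by omega)
    rw [hcn, hgn, e0, e1] at hB
    linarith [hA, hB]
  have up : ∀ d, m + 1 + d ≤ n → f (n - (m + d)) = f (m + d) ∧
      f (n - (m + 1 + d)) = f (m + 1 + d) := by
    intro d
    induction d with
    | zero => intro _; exact ⟨h0, h1⟩
    | succ d ih =>
      intro hd
      obtain ⟨ih0, ih1⟩ := ih (by omega)
      refine ⟨by rwa [show m + (d+1) = m + 1 + d by omega], ?_⟩
      have := key (m + 1 + d) (by omega) (by omega) ih1
        (by rwa [show m + 1 + d - 1 = m + d by omega])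
      rwa [show m + 1 + (d+1) = m + 1 + d + 1 by omega]
  have down : ∀ d, d ≤ m → f (n - (m - d)) = f (m - d) ∧
      f (n - (m - d + 1)) = f (m - d + 1) := by
    intro d
    induction d with
    | zero => intro _; exact ⟨h0, h1⟩
    | succ d ih =>
      intro hd
      obtain ⟨ih0, ih1⟩ := ih (by omega)
      have hstep := keydown (m - d) (by omega) (by omega) ih0 ih1
      constructor
      · rwa [show m - (d+1) = m - d - 1 by omega]
      · rwa [show m - (d+1) + 1 = m - d by omega]
  intro t htn
  rcases le_or_gt t m with h | h
  · have := (down (m - t) (by omega)).1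
    rwa [show m - (m - t) = t by omega] at this
  · have := (up (t - (m+1)) (by omega)).2
    rwa [show m + 1 + (t - (m+1)) = t by omega] at this

/-- Along a critical curve (reduced word a palindrome, `C = Q_{k+1} - Q_k` for
`n = 2k+1` odd, `C = Q_{k+1} - Q_{k-1}` for `n = 2k` even), the sum
`∑_{t=1}^n {φ_t, C} = ∑_{t=1}^n Δ_t/(Q_t² + Q_{t-1}²)` vanishes on `C = 0`:
the sum of the ray angles is constant along the curve. -/
theorem sum_angle_brackets_vanishes (s : ℕ → Bool) (n k : ℕ) (hn2 : 2 ≤ n)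
    (hparity : n = 2 * k + 1 ∨ (n = 2 * k ∧ 1 ≤ k))
    (hpal : ∀ i, 1 ≤ i → i ≤ n - 1 → s i = s (n - i))
    (C : ℝ → ℝ → ℝ)
    (hC : ∀ a b : ℝ, C a b =
      contQ s a b (k + 1) - contQ s a b (if n = 2 * k + 1 then k else k - 1)) :
    ∀ a b : ℝ, C a b = 0 →
      (∑ t ∈ Finset.Icc 1 n,
        Δ s C t a b / (contQ s a b t ^ 2 + contQ s a b (t - 1) ^ 2)) = 0 := by
  intro a b hab
  set k' : ℕ := if n = 2 * k + 1 then k else k - 1 with hk'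
  have hk'cases : (n = 2 * k + 1 ∧ k' = k) ∨ (n = 2 * k ∧ 1 ≤ k ∧ k' = k - 1) := by
    rcases hparity with h | ⟨h, h1⟩
    · left; exact ⟨h, by rw [hk', if_pos h]⟩
    · right; exact ⟨h, h1, by rw [hk', if_neg (by omega)]⟩
  have e1 : n - k' = k + 1 := by rcases hk'cases with ⟨h, hk⟩ | ⟨h, h1, hk⟩ <;> omega
  have e2 : n - (k' + 1) = k := by rcases hk'cases with ⟨h, hk⟩ | ⟨h, h1, hk⟩ <;> omega
  have e3 : k' + 1 ≤ n := by rcases hk'cases with ⟨h, hk⟩ | ⟨h, h1, hk⟩ <;> omega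
  have e4 : k' = k ∨ k' + 1 = k := by rcases hk'cases with ⟨h, hk⟩ | ⟨h, h1, hk⟩ <;> omega
  rw [hC a b] at hab
  -- q symmetry
  have hqsym : ∀ t ≤ n, contQ s a b (n - t) = contQ s a b t := by
    refine sym_rec n k' (fun t => if s t then a else b) (fun _ => (0:ℝ))
      (fun t => contQ s a b t) ?_ ?_ ?_ e3 ?_ ?_
    · intro t; simp only [contQ]; ring
    · intro t h1 h2; simp only [hpal t h1 h2]
    · intro t _ _; rfl
    · show contQ s a b (n - k') = contQ s a b k'
      rw [e1]; exact sub_eq_zero.1 hab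
    · show contQ s a b (n - (k' + 1)) = contQ s a b (k' + 1)
      rw [e2]
      rcases e4 with h | h
      · rw [h] at hab ⊢; exact (sub_eq_zero.1 hab).symm
      · rw [← h]
  -- derivatives of C
  set Ca : ℝ := dQa s a b (k + 1) - dQa s a b k' with hCav
  set Cb : ℝ := dQb s a b (k + 1) - dQb s a b k' with hCbv
  have hCaD : deriv (fun u => C u b) a = Ca := by
    have hfun : (fun u => C u b) = fun u => contQ s u b (k + 1) - contQ s u b k' := by
      funext u; rw [hC u b]
    rw [hfun, hCav]
    exact ((hQa s a b (k + 1)).sub (hQa s a b k')).deriv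
  have hCbD : deriv (fun v => C a v) b = Cb := by
    have hfun : (fun v => C a v) = fun v => contQ s a v (k + 1) - contQ s a v k' := by
      funext v; rw [hC a v]
    rw [hfun, hCbv]
    exact ((hQb s a b (k + 1)).sub (hQb s a b k')).deriv
  set x : ℕ → ℝ := fun t => dQa s a b t * Cb - dQb s a b t * Ca with hxv
  have hpb : ∀ t, pb (fun u v => contQ s u v t) C a b = x t := by
    intro t
    simp only [pb]
    rw [(hQa s a b t).deriv, (hQb s a b t).deriv, hCaD, hCbD, hxv]
  -- x symmetry
  have hxC : x (k + 1) - x k' = 0 := by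
    simp only [hxv]; rw [hCav, hCbv]; ring
  have hxsym : ∀ t ≤ n, x (n - t) = x t := by
    refine sym_rec n k' (fun t => if s t then a else b)
      (fun t => ((if s t then (1:ℝ) else 0) * Cb - (if s t then (0:ℝ) else 1) * Ca)
        * contQ s a b t) x ?_ ?_ ?_ e3 ?_ ?_
    · intro t
      simp only [hxv, dQa, dQb]
      by_cases h : s (t + 1) <;> simp only [h, if_true, if_false] <;> ring
    · intro t h1 h2; simp only [hpal t h1 h2]
    · intro t h1 h2
      simp only [hpal t h1 h2, hqsym t (by omega)]
    · show x (n - k') = x k'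
      rw [e1]; linarith
    · show x (n - (k' + 1)) = x (k' + 1)
      rw [e2]
      rcases e4 with h | h
      · rw [h] at hxC ⊢; linarith
      · rw [← h]
  -- Δ in terms of x
  have hΔ : ∀ t, Δ s C t a b = contQ s a b t * x (t - 1) - contQ s a b (t - 1) * x t := by
    intro t; simp only [Δ]; rw [hpb, hpb]
  have hpairs : ∀ t, 1 ≤ t → t ≤ n →
      Δ s C t a b / (contQ s a b t ^ 2 + contQ s a b (t - 1) ^ 2)
      + Δ s C (n + 1 - t) a b
        / (contQ s a b (n + 1 - t) ^ 2 + contQ s a b (n + 1 - t - 1) ^ 2) = 0 := by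
    intro t h1t htn
    have q1 : contQ s a b (n + 1 - t) = contQ s a b (t - 1) := by
      have := hqsym (t - 1) (by omega)
      rwa [show n - (t - 1) = n + 1 - t by omega] at this
    have q2 : contQ s a b (n + 1 - t - 1) = contQ s a b t := by
      have := hqsym t htn
      rwa [show n - t = n + 1 - t - 1 by omega] at this
    have x1 : x (n + 1 - t) = x (t - 1) := by
      have := hxsym (t - 1) (by omega)
      rwa [show n - (t - 1) = n + 1 - t by omega] at this
    have x2 : x (n + 1 - t - 1) = x t := by
      have := hxsym t htn
      rwa [show n - t = n + 1 - t - 1 by omega] at this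
    rw [hΔ, hΔ, q1, q2, x1, x2]
    have hneg : contQ s a b (t - 1) * x t - contQ s a b t * x (t - 1)
        = -(contQ s a b t * x (t - 1) - contQ s a b (t - 1) * x t) := by ring
    rw [hneg, neg_div,
      show contQ s a b (t - 1) ^ 2 + contQ s a b t ^ 2
        = contQ s a b t ^ 2 + contQ s a b (t - 1) ^ 2 from add_comm _ _]
    exact add_neg_cancel _
  refine Finset.sum_involution (fun t _ => n + 1 - t) ?_ ?_ ?_ ?_
  · intro t ht
    simp only [Finset.mem_Icc] at ht
    exact hpairs t ht.1 ht.2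
  · intro t ht hne heq
    simp only [Finset.mem_Icc] at ht
    apply hne
    have heq' : n + 1 - t = t := heq
    have := hpairs t ht.1 ht.2
    rw [heq'] at this
    linarith
  · intro t ht
    simp only [Finset.mem_Icc] at ht
    show n + 1 - t ∈ Finset.Icc 1 n
    simp only [Finset.mem_Icc]
    omega
  · intro t ht
    simp only [Finset.mem_Icc] at ht
    show n + 1 - (n + 1 - t) = t
    omega
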